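/- Let α > 1 and 0 < η < 1, and set γ = 1/(2^α − 2) + (η/(1−η))·(1 + 1/(2^α − 2)). For any two vertices x, y ∈ V with x →^{𝒮η} y (i.e. y lies on the outer boundary of the η-stabiliser of x), one has η·r(𝒞_x)^α ≤ d(x,y) ≤ 1 + γ·r(𝒞_x)^α. -/

import Mathlib

open scoped ENNReal NNReal
open MeasureTheory

namespace CMPPaper

variable {V : Type*}

/-- Graph distance between two subsets of vertices, valued in `ℝ≥0∞`
(`⊤` when one of the sets is empty). -/
noncomputable def setDist (G : SimpleGraph V) (A B : Set V) : ℝ≥0∞ :=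
  ⨅ (x : A) (y : B), (G.dist x.1 y.1 : ℝ≥0∞)

/-- Total weight `r(A) = Σ_{x ∈ A} r(x) ∈ [0,∞]` of a set of vertices. -/
noncomputable def wt (r : V → ℝ≥0) (A : Set V) : ℝ≥0∞ :=
  ∑' x : A, (r x.1 : ℝ≥0∞)

/-- A partition (encoded as a setoid) of the vertex set is `(r,α)`-admissible if any two
distinct clusters `C ≠ C'` satisfy `d(C,C') > min(r(C), r(C'))^α`. -/
def Admissible (G : SimpleGraph V) (r : V → ℝ≥0) (α : ℝ) (s : Setoid V) : Prop :=
  ∀ C ∈ s.classes, ∀ C' ∈ s.classes, C ≠ C' →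
    (min (wt r C) (wt r C')) ^ α < setDist G C C'

/-- The cumulatively merged partition: the finest `(r,α)`-admissible partition, i.e. the
intersection (infimum as setoids) of all `(r,α)`-admissible partitions. -/
noncomputable def CMP (G : SimpleGraph V) (r : V → ℝ≥0) (α : ℝ) : Setoid V :=
  sInf {s : Setoid V | Admissible G r α s}

/-- The cluster of the CMP containing `x`. -/
def cluster (G : SimpleGraph V) (r : V → ℝ≥0) (α : ℝ) (x : V) : Set V :=
  {y | (CMP G r α) x y}

/-- The ball `B(A, l) = {z : d(z,A) ≤ l}` around a set of vertices. -/
def ballSet (G : SimpleGraph V) (A : Set V) (l : ℝ≥0∞) : Set V :=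
  {z | ∃ a ∈ A, (G.dist z a : ℝ≥0∞) ≤ l}

/-- A subset `H` of the vertices is stable if every cluster `C` of the CMP of the induced
subgraph on `H` (with the restricted weights) satisfies `B(C, r(C)^α) ⊆ H`. -/
def IsStable (G : SimpleGraph V) (r : V → ℝ≥0) (α : ℝ) (H : Set V) : Prop :=
  ∀ C ∈ (CMP (G.induce H) (fun x : H => r x) α).classes,
    ballSet G (Subtype.val '' C) ((wt (fun x : H => r x) C) ^ α) ⊆ H

/-- The stabiliser of `W`: the smallest stable set containing `W`, i.e. the intersection of
all stable sets containing `W`. -/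
def stabiliser (G : SimpleGraph V) (r : V → ℝ≥0) (α : ℝ) (W : Set V) : Set V :=
  ⋂₀ {H : Set V | IsStable G r α H ∧ W ⊆ H}

open Classical in
/-- The merging operator `M_{x,y}`: if the clusters of `x` and `y` are distinct and
`d(x,y) ≤ min(r(𝒞_x), r(𝒞_y))^α`, merge them (take the smallest coarsening of `s`
relating `x` and `y`); otherwise leave the partition unchanged. -/
noncomputable def mergeOp (G : SimpleGraph V) (r : V → ℝ≥0) (α : ℝ) (x y : V)
    (s : Setoid V) : Setoid V :=
  if ¬ s x y ∧ (G.dist x y : ℝ≥0∞) ≤ (min (wt r {u | s x u}) (wt r {u | s y u})) ^ α then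
    sInf {t : Setoid V | s ≤ t ∧ t x y}
  else s

/-- The relation `C ↦ C'` (`C'` descends from `C`) on clusters of the CMP. -/
def Descends (G : SimpleGraph V) (r : V → ℝ≥0) (α : ℝ) (C C' : Set V) : Prop :=
  C ∈ (CMP G r α).classes ∧ C' ∈ (CMP G r α).classes ∧ C ≠ C' ∧
    setDist G C C' ≤ (wt r C) ^ α

/-- Integer part of an extended nonnegative real, valued in `ℕ∞`. -/
noncomputable def efloor (x : ℝ≥0∞) : ℕ∞ :=
  if x = ⊤ then ⊤ else (⌊x.toReal⌋₊ : ℕ∞)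

/-- The bound `max(w log₂ w / 2, 0)` (for `α = 1`), resp. `w^α/(2^α-2)` (for `α ≠ 1`),
on the diameter of a cluster of total weight `w`. -/
noncomputable def diamBound (α : ℝ) (w : ℝ≥0∞) : ℝ≥0∞ :=
  if α = 1 then
    (if w = ⊤ then ⊤ else ENNReal.ofReal (max (w.toReal * Real.logb 2 w.toReal / 2) 0))
  else w ^ α / ((2 : ℝ≥0∞) ^ α - 2)

/-- The relation `C →η C'` on clusters of the CMP:  `d(C,C') ≤ η·r(C)^α`. -/
def EtaDesc (G : SimpleGraph V) (r : V → ℝ≥0) (α η : ℝ) (C C' : Set V) : Prop :=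
  C ∈ (CMP G r α).classes ∧ C' ∈ (CMP G r α).classes ∧ C ≠ C' ∧
    setDist G C C' ≤ ENNReal.ofReal η * (wt r C) ^ α

/-- The `η`-stabiliser of a vertex `x`: the union of `𝒞_x` together with all clusters
reachable from `𝒞_x` by a finite oriented path for the relation `→η`. -/
def etaStab (G : SimpleGraph V) (r : V → ℝ≥0) (α η : ℝ) (x : V) : Set V :=
  ⋃₀ {C' | Relation.ReflTransGen (EtaDesc G r α η) (cluster G r α x) C'}

/-- The path graph on `ℕ`: `m` and `m+1` are adjacent. -/
def pathGraphN : SimpleGraph ℕ := SimpleGraph.fromRel (fun m n => n = m + 1)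

/-- The two-sided path graph on `ℤ`: `k` and `k+1` are adjacent. -/
def pathGraphZ : SimpleGraph ℤ := SimpleGraph.fromRel (fun a b => b = a + 1)

/-- The hypercubic lattice `ℤ^d`: `x` and `y` are adjacent iff `‖x-y‖₁ = 1`. -/
def latticeGraph (d : ℕ) : SimpleGraph (Fin d → ℤ) :=
  SimpleGraph.fromRel (fun x y => (∑ i, |x i - y i|) = 1)

/-- The CMP of the weighted graph `(G, r)` with expansion exponent `α` has an
infinite cluster. -/
def HasInfiniteCluster (G : SimpleGraph V) (r : V → ℝ≥0) (α : ℝ) : Prop :=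
  ∃ C ∈ (CMP G r α).classes, C.Infinite

/-- `w` is an i.i.d. family of Bernoulli(`p`) weights indexed by `V`, under the
probability measure `μ`. -/
def IsBernoulliField {Ω : Type*} [MeasurableSpace Ω] (μ : Measure Ω)
    (p : ℝ) (w : Ω → V → ℝ≥0) : Prop :=
  (∀ x : V, Measurable fun ω => w ω x) ∧
  (∀ ω x, w ω x = 0 ∨ w ω x = 1) ∧
  (∀ x : V, μ {ω | w ω x = 1} = ENNReal.ofReal p) ∧
  ProbabilityTheory.iIndepFun (fun x ω => w ω x) μ

/-- `w` is an i.i.d. family of weights indexed by `V`, each with law `ν`, under the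
probability measure `μ`. -/
def IsIIDField {Ω : Type*} [MeasurableSpace Ω] (μ : Measure Ω)
    (ν : Measure ℝ≥0) (w : Ω → V → ℝ≥0) : Prop :=
  (∀ x : V, Measurable fun ω => w ω x) ∧
  (∀ x : V, μ.map (fun ω => w ω x) = ν) ∧
  ProbabilityTheory.iIndepFun (fun x ω => w ω x) μ

section AuxLemmas

variable (G : SimpleGraph V) (r : V → ℝ≥0) {α η : ℝ}

lemma setDist_le_dist {A B : Set V} {a b : V} (ha : a ∈ A) (hb : b ∈ B) :
    setDist G A B ≤ (G.dist a b : ℝ≥0∞) := by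
  unfold setDist
  exact iInf_le_of_le (⟨a, ha⟩ : A) (iInf_le_of_le (⟨b, hb⟩ : B) le_rfl)

lemma exists_setDist_eq {A B : Set V} (hA : A.Nonempty) (hB : B.Nonempty) :
    ∃ a ∈ A, ∃ b ∈ B, (G.dist a b : ℝ≥0∞) = setDist G A B := by
  obtain ⟨a0, ha0⟩ := hA
  obtain ⟨b0, hb0⟩ := hB
  have hTne : {n : ℕ | ∃ a ∈ A, ∃ b ∈ B, G.dist a b = n}.Nonempty :=
    ⟨G.dist a0 b0, a0, ha0, b0, hb0, rfl⟩
  have hmem := Nat.sInf_mem hTne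
  simp only [Set.mem_setOf_eq] at hmem
  obtain ⟨a, ha, b, hb, hab⟩ := hmem
  refine ⟨a, ha, b, hb, le_antisymm ?_ (setDist_le_dist G ha hb)⟩
  unfold setDist
  refine le_iInf fun p => le_iInf fun q => ?_
  rw [hab]
  have hle : sInf {n : ℕ | ∃ a ∈ A, ∃ b ∈ B, G.dist a b = n} ≤ G.dist p.1 q.1 :=
    Nat.sInf_le ⟨p.1, p.2, q.1, q.2, rfl⟩
  exact_mod_cast hle

lemma setDist_anti {A A' B B' : Set V} (hA : A ⊆ A') (hB : B ⊆ B') :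
    setDist G A' B' ≤ setDist G A B :=
  le_iInf fun a => le_iInf fun b => setDist_le_dist G (hA a.2) (hB b.2)

lemma wt_mono {A B : Set V} (h : A ⊆ B) : wt r A ≤ wt r B :=
  ENNReal.tsum_comp_le_tsum_of_injective (Set.inclusion_injective h) fun y => (r y.1 : ℝ≥0∞)

lemma wt_union {A B : Set V} (h : Disjoint A B) : wt r (A ∪ B) = wt r A + wt r B := by
  unfold wt
  exact Summable.tsum_union_disjoint (f := fun v => (r v : ℝ≥0∞)) h ENNReal.summable ENNReal.summable

lemma cmp_le_of_admissible {s : Setoid V} (hs : Admissible G r α s) : CMP G r α ≤ s :=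
  sInf_le hs

lemma cluster_eq_class (x : V) : cluster G r α x = {w | (CMP G r α) w x} := by
  ext w
  exact ⟨fun h => (CMP G r α).symm' h, fun h => (CMP G r α).symm' h⟩

lemma cluster_mem_classes (x : V) : cluster G r α x ∈ (CMP G r α).classes := by
  rw [cluster_eq_class]
  exact (CMP G r α).mem_classes x

lemma mem_cluster_self (x : V) : x ∈ cluster G r α x := (CMP G r α).refl' x

lemma class_nonempty {t : Setoid V} {E : Set V} (hE : E ∈ t.classes) : E.Nonempty := by
  obtain ⟨z, rfl⟩ := hE
  exact ⟨z, t.refl' z⟩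

lemma cmp_admissible (hα : 0 ≤ α) : Admissible G r α (CMP G r α) := by
  intro C hC C' hC' hne
  by_contra hlt
  rw [not_lt] at hlt
  obtain ⟨z, rfl⟩ := hC
  obtain ⟨z', rfl⟩ := hC'
  refine hne ?_
  have hzz' : (CMP G r α) z z' := by
    refine Setoid.sInf_iff.mpr fun s hs => ?_
    by_contra hs'
    have hne2 : {w | s w z} ≠ {w | s w z'} := by
      intro he
      exact hs' (by
        have hz : z ∈ {w | s w z} := s.refl' z
        rw [he] at hz
        exact hz)
    have hadm := hs _ (s.mem_classes z) _ (s.mem_classes z') hne2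
    have hsub : {w | (CMP G r α) w z} ⊆ {w | s w z} :=
      fun w hw => Setoid.le_def.mp (cmp_le_of_admissible G r hs) hw
    have hsub' : {w | (CMP G r α) w z'} ⊆ {w | s w z'} :=
      fun w hw => Setoid.le_def.mp (cmp_le_of_admissible G r hs) hw
    have h1 : setDist G {w | s w z} {w | s w z'} ≤
        setDist G {w | (CMP G r α) w z} {w | (CMP G r α) w z'} :=
      setDist_anti G hsub hsub'
    have h2 : min (wt r {w | (CMP G r α) w z}) (wt r {w | (CMP G r α) w z'}) ^ α ≤
        min (wt r {w | s w z}) (wt r {w | s w z'}) ^ α :=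
      ENNReal.rpow_le_rpow (min_le_min (wt_mono r hsub) (wt_mono r hsub')) hα
    exact absurd hadm (not_lt.mpr (h1.trans (hlt.trans h2)))
  ext w
  exact ⟨fun hw => (CMP G r α).trans' hw hzz',
    fun hw => (CMP G r α).trans' hw ((CMP G r α).symm' hzz')⟩

lemma eta_step_wt (hα : 0 ≤ α) (hη1 : η < 1) {C C' : Set V}
    (h : EtaDesc G r α η C C') : wt r C' ^ α ≤ ENNReal.ofReal η * wt r C ^ α := by
  obtain ⟨hC, hC', hne, hd⟩ := h
  have hadm := cmp_admissible G r hα C hC C' hC' hne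
  have hlt : min (wt r C) (wt r C') ^ α < ENNReal.ofReal η * wt r C ^ α :=
    lt_of_lt_of_le hadm hd
  rcases le_total (wt r C) (wt r C') with hle | hle
  · exfalso
    rw [min_eq_left hle] at hlt
    have hle1 : ENNReal.ofReal η * wt r C ^ α ≤ wt r C ^ α := by
      calc ENNReal.ofReal η * wt r C ^ α ≤ 1 * wt r C ^ α :=
            mul_le_mul_left (ENNReal.ofReal_le_one.mpr hη1.le) _
        _ = wt r C ^ α := one_mul _
    exact absurd (lt_of_lt_of_le hlt hle1) (lt_irrefl _)
  · rw [min_eq_right hle] at hlt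
    exact hlt.le

end AuxLemmas

section Analytic

lemma real_key {α : ℝ} (hα : 1 ≤ α) {a b : ℝ} (hb : 0 ≤ b) (hba : b ≤ a) :
    a ^ α + (2 ^ α - 1) * b ^ α ≤ (a + b) ^ α := by
  have ha : 0 ≤ a := hb.trans hba
  have hα0 : (0:ℝ) ≤ α := by linarith
  rcases eq_or_lt_of_le hb with hb0 | hb0
  · rw [← hb0, Real.zero_rpow (by linarith : α ≠ 0), add_zero]
    simp
  · have hmono : MonotoneOn (fun t : ℝ => (t + b) ^ α - t ^ α) (Set.Ici b) := by
      refine monotoneOn_of_deriv_nonneg (convex_Ici b) ?_ ?_ ?_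
      · exact (((continuous_id.add continuous_const).rpow_const
          (fun t => Or.inr hα0)).sub (continuous_id.rpow_const fun t => Or.inr hα0)).continuousOn
      · intro t ht
        rw [interior_Ici] at ht
        have htb : 0 < t := hb0.trans ht
        have h1 : HasDerivAt (fun t : ℝ => (t + b) ^ α) (α * (t + b) ^ (α - 1) * 1) t :=
          by have h := (Real.hasDerivAt_rpow_const (p := α) (Or.inl (by positivity : t + b ≠ 0))).comp t
                ((hasDerivAt_id t).add_const b); exact h
        have h2 : HasDerivAt (fun t : ℝ => t ^ α) (α * t ^ (α - 1)) t :=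
          Real.hasDerivAt_rpow_const (Or.inl htb.ne')
        exact (h1.sub h2).differentiableAt.differentiableWithinAt
      · intro t ht
        rw [interior_Ici] at ht
        have htb : 0 < t := hb0.trans ht
        have h1 : HasDerivAt (fun t : ℝ => (t + b) ^ α) (α * (t + b) ^ (α - 1) * 1) t :=
          by have h := (Real.hasDerivAt_rpow_const (p := α) (Or.inl (by positivity : t + b ≠ 0))).comp t
                ((hasDerivAt_id t).add_const b); exact h
        have h2 : HasDerivAt (fun t : ℝ => t ^ α) (α * t ^ (α - 1)) t :=
          Real.hasDerivAt_rpow_const (Or.inl htb.ne')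
        rw [show (fun t : ℝ => (t + b) ^ α - t ^ α) = (fun t => (t + b) ^ α) - (fun t => t ^ α) from rfl, (h1.sub h2).deriv]
        have hmon : t ^ (α - 1) ≤ (t + b) ^ (α - 1) :=
          Real.rpow_le_rpow htb.le (by linarith) (by linarith)
        nlinarith
    have hfb := hmono (Set.self_mem_Ici) (show a ∈ Set.Ici b from hba) hba
    simp only at hfb
    have h2b : (b + b) ^ α = 2 ^ α * b ^ α := by
      rw [show b + b = 2 * b by ring, Real.mul_rpow (by norm_num) hb]
    rw [h2b] at hfb
    nlinarith [Real.rpow_nonneg hb α]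

lemma merge_real {α : ℝ} (hα : 1 < α) {a b : ℝ} (hb : 0 ≤ b) (hba : b ≤ a) :
    a ^ α * (2 ^ α - 2)⁻¹ + b ^ α + b ^ α * (2 ^ α - 2)⁻¹ ≤ (a + b) ^ α * (2 ^ α - 2)⁻¹ := by
  have h2 : (0:ℝ) < 2 ^ α - 2 := by
    have h21 : (2:ℝ) ^ (1:ℝ) < 2 ^ α := Real.rpow_lt_rpow_of_exponent_lt (by norm_num) hα
    rw [Real.rpow_one] at h21
    linarith
  have hkey := real_key hα.le hb hba
  have hmul := mul_le_mul_of_nonneg_right hkey (by positivity : (0:ℝ) ≤ (2 ^ α - 2)⁻¹)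
  have hid : ((2:ℝ) ^ α - 2) * ((2:ℝ) ^ α - 2)⁻¹ = 1 := mul_inv_cancel₀ h2.ne'
  nlinarith [Real.rpow_nonneg hb α, Real.rpow_nonneg (add_nonneg (hb.trans hba) hb) α]

lemma merge_key_aux {α : ℝ} (hα : 1 < α) {a b : ℝ≥0∞} (ha : a ≠ ⊤) (hb : b ≠ ⊤) (hba : b ≤ a) :
    a ^ α * ENNReal.ofReal (2 ^ α - 2)⁻¹ + b ^ α + b ^ α * ENNReal.ofReal (2 ^ α - 2)⁻¹
      ≤ (a + b) ^ α * ENNReal.ofReal (2 ^ α - 2)⁻¹ := by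
  have hα0 : (0:ℝ) ≤ α := by linarith
  have hA : 0 ≤ a.toReal := ENNReal.toReal_nonneg
  have hB : 0 ≤ b.toReal := ENNReal.toReal_nonneg
  have hBA : b.toReal ≤ a.toReal := (ENNReal.toReal_le_toReal hb ha).mpr hba
  have h2 : (0:ℝ) < 2 ^ α - 2 := by
    have h21 : (2:ℝ) ^ (1:ℝ) < 2 ^ α := Real.rpow_lt_rpow_of_exponent_lt (by norm_num) hα
    rw [Real.rpow_one] at h21
    linarith
  have hm1 : 0 ≤ a.toReal ^ α * ((2:ℝ) ^ α - 2)⁻¹ :=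
    mul_nonneg (Real.rpow_nonneg hA _) (inv_nonneg.mpr h2.le)
  have hm2 : 0 ≤ b.toReal ^ α * ((2:ℝ) ^ α - 2)⁻¹ :=
    mul_nonneg (Real.rpow_nonneg hB _) (inv_nonneg.mpr h2.le)
  rw [show a = ENNReal.ofReal a.toReal from (ENNReal.ofReal_toReal ha).symm,
    show b = ENNReal.ofReal b.toReal from (ENNReal.ofReal_toReal hb).symm,
    ← ENNReal.ofReal_add hA hB,
    ENNReal.ofReal_rpow_of_nonneg hA hα0, ENNReal.ofReal_rpow_of_nonneg hB hα0,
    ENNReal.ofReal_rpow_of_nonneg (add_nonneg hA hB) hα0,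
    ← ENNReal.ofReal_mul (Real.rpow_nonneg hA _), ← ENNReal.ofReal_mul (Real.rpow_nonneg hB _),
    ← ENNReal.ofReal_mul (Real.rpow_nonneg (add_nonneg hA hB) _),
    ← ENNReal.ofReal_add hm1 (Real.rpow_nonneg hB _),
    ← ENNReal.ofReal_add (add_nonneg hm1 (Real.rpow_nonneg hB _)) hm2]
  exact ENNReal.ofReal_le_ofReal (merge_real hα hB hBA)

lemma merge_key {α : ℝ} (hα : 1 < α) (a b : ℝ≥0∞) :
    a ^ α * ENNReal.ofReal (2 ^ α - 2)⁻¹ + min a b ^ α + b ^ α * ENNReal.ofReal (2 ^ α - 2)⁻¹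
      ≤ (a + b) ^ α * ENNReal.ofReal (2 ^ α - 2)⁻¹ := by
  have hα0 : (0:ℝ) < α := by linarith
  have h2 : (0:ℝ) < 2 ^ α - 2 := by
    have h21 : (2:ℝ) ^ (1:ℝ) < 2 ^ α := Real.rpow_lt_rpow_of_exponent_lt (by norm_num) hα
    rw [Real.rpow_one] at h21
    linarith
  have hκpos : 0 < ENNReal.ofReal (2 ^ α - 2)⁻¹ := ENNReal.ofReal_pos.mpr (by positivity)
  rcases eq_or_ne a ⊤ with rfl | ha
  · rw [top_add, ENNReal.top_rpow_of_pos hα0, ENNReal.top_mul hκpos.ne']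
    exact le_top
  rcases eq_or_ne b ⊤ with rfl | hb
  · rw [add_top, ENNReal.top_rpow_of_pos hα0, ENNReal.top_mul hκpos.ne']
    exact le_top
  rcases le_total b a with hba | hab
  · rw [min_eq_right hba]
    exact merge_key_aux hα ha hb hba
  · rw [min_eq_left hab]
    have h := merge_key_aux hα hb ha hab
    rw [add_comm b a] at h
    calc a ^ α * ENNReal.ofReal (2 ^ α - 2)⁻¹ + a ^ α + b ^ α * ENNReal.ofReal (2 ^ α - 2)⁻¹
        = b ^ α * ENNReal.ofReal (2 ^ α - 2)⁻¹ + a ^ α + a ^ α * ENNReal.ofReal (2 ^ α - 2)⁻¹ := by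
          ring
      _ ≤ (a + b) ^ α * ENNReal.ofReal (2 ^ α - 2)⁻¹ := h

end Analytic

section Diam

variable (G : SimpleGraph V) (r : V → ℝ≥0) {α : ℝ}

lemma cmp_good (hconn : G.Connected) (hα : 1 < α) :
    ∀ E ∈ (CMP G r α).classes, ∀ u ∈ E, ∀ v ∈ E,
      (G.dist u v : ℝ≥0∞) ≤ wt r E ^ α * ENNReal.ofReal (2 ^ α - 2)⁻¹ := by
  have hα0 : (0:ℝ) ≤ α := by linarith
  set κ := ENNReal.ofReal ((2:ℝ) ^ α - 2)⁻¹ with hκdef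
  set P := CMP G r α with hPdef
  set S : Set (Setoid V) :=
    {t | t ≤ P ∧ ∀ E ∈ t.classes, ∀ u ∈ E, ∀ v ∈ E, (G.dist u v : ℝ≥0∞) ≤ wt r E ^ α * κ}
    with hSdef
  have hbot : (⊥ : Setoid V) ∈ S := by
    refine ⟨bot_le, ?_⟩
    intro E hE u hu v hv
    obtain ⟨z, rfl⟩ := hE
    have hu' : u = z := hu
    have hv' : v = z := hv
    subst hu'
    subst hv'
    simp [SimpleGraph.dist_self]
  have hchain : ∀ c ⊆ S, IsChain (· ≤ ·) c → ∀ t₀ ∈ c, ∃ ub ∈ S, ∀ t ∈ c, t ≤ ub := by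
    intro c hcS hc t₀ ht₀
    refine ⟨⟨fun z w => ∃ t ∈ c, t z w,
      ⟨fun z => ⟨t₀, ht₀, t₀.refl' z⟩,
       fun {z w} h => by
         obtain ⟨t, ht, h⟩ := h
         exact ⟨t, ht, t.symm' h⟩,
       fun {z w x} h1 h2 => by
         obtain ⟨t1, ht1, h1⟩ := h1
         obtain ⟨t2, ht2, h2⟩ := h2
         rcases hc.total ht1 ht2 with h | h
         · exact ⟨t2, ht2, t2.trans' (h h1) h2⟩
         · exact ⟨t1, ht1, t1.trans' h1 (h h2)⟩⟩⟩, ⟨?_, ?_⟩,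
      fun t ht => Setoid.le_def.mpr fun {x y} h => ⟨t, ht, h⟩⟩
    · refine Setoid.le_def.mpr fun {z w} h => ?_
      obtain ⟨t, ht, h⟩ := h
      exact Setoid.le_def.mp (hcS ht).1 h
    · intro E hE u hu v hv
      obtain ⟨z, rfl⟩ := hE
      obtain ⟨t1, ht1, h1⟩ := hu
      obtain ⟨t2, ht2, h2⟩ := hv
      have key : ∀ t ∈ c, t u z → t v z →
          (G.dist u v : ℝ≥0∞) ≤ wt r {w | ∃ t ∈ c, t w z} ^ α * κ := by
        intro t ht hu' hv'
        have hgood := (hcS ht).2 _ (t.mem_classes z) u hu' v hv'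
        have hsub : {w | t w z} ⊆ {w | ∃ t ∈ c, t w z} := fun w hw => ⟨t, ht, hw⟩
        exact hgood.trans
          (mul_le_mul_left (ENNReal.rpow_le_rpow (wt_mono r hsub) hα0) κ)
      rcases hc.total ht1 ht2 with h | h
      · exact key t2 ht2 (h h1) h2
      · exact key t1 ht1 h1 (h h2)
  obtain ⟨m, -, hmax⟩ := zorn_le_nonempty₀ S hchain ⊥ hbot
  have hmS : m ∈ S := hmax.1
  have hmLEP : m ≤ P := hmS.1
  have hgoodm := hmS.2
  suffices hPle : P ≤ m by
    have hmP : m = P := le_antisymm hmLEP hPle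
    rw [← hmP]
    exact hgoodm
  by_contra hnot
  obtain ⟨u, v, huv, hmuv⟩ : ∃ u v, P u v ∧ ¬ m u v := by
    by_contra h
    push_neg at h
    exact hnot (Setoid.le_def.mpr fun {x y} hxy => h x y hxy)
  set C := {w | P w u} with hCdef
  have hCcl : C ∈ P.classes := P.mem_classes u
  have huC : u ∈ C := P.refl' u
  have hvC : v ∈ C := P.symm' huv
  have hCmem : ∀ {z w : V}, P z w → z ∈ C → w ∈ C :=
    fun {z w} hzw hz => P.trans' (P.symm' hzw) hz
  have hCrel : ∀ z ∈ C, ∀ w ∈ C, P z w :=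
    fun z hz w hw => P.trans' hz (P.symm' hw)
  -- Step A: there exist two close m-classes inside C
  have hA : ∃ e, e ∈ C ∧ ∃ e', e' ∈ C ∧ ¬ m e e' ∧
      setDist G {w | m w e} {w | m w e'} ≤
        min (wt r {w | m w e}) (wt r {w | m w e'}) ^ α := by
    by_contra hno
    push_neg at hno
    let s : Setoid V :=
      ⟨fun z w => P z w ∧ (z ∈ C → m z w),
        ⟨fun z => ⟨P.refl' z, fun _ => m.refl' z⟩,
         fun {z w} h => ⟨P.symm' h.1, fun hw => m.symm' (h.2 (hCmem (P.symm' h.1) hw))⟩,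
         fun {z w x} h1 h2 =>
           ⟨P.trans' h1.1 h2.1, fun hz => m.trans' (h1.2 hz) (h2.2 (hCmem h1.1 hz))⟩⟩⟩
    have hcls1 : ∀ z, z ∈ C → {w | s w z} = {w | m w z} := by
      intro z hz
      ext w
      simp only [Set.mem_setOf_eq]
      constructor
      · rintro ⟨h1, h2⟩
        exact h2 (hCmem (P.symm' h1) hz)
      · intro hm
        exact ⟨Setoid.le_def.mp hmLEP hm, fun _ => hm⟩
    have hcls2 : ∀ z, z ∉ C → {w | s w z} = {w | P w z} := by
      intro z hz
      ext w
      simp only [Set.mem_setOf_eq]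
      constructor
      · exact fun h => h.1
      · intro hP
        exact ⟨hP, fun hw => absurd (hCmem hP hw) hz⟩
    have hsadm : Admissible G r α s := by
      intro E hE E' hE' hne
      obtain ⟨z, rfl⟩ := hE
      obtain ⟨z', rfl⟩ := hE'
      by_cases hz : z ∈ C <;> by_cases hz' : z' ∈ C
      · rw [hcls1 z hz, hcls1 z' hz'] at hne ⊢
        have hmzz' : ¬ m z z' := by
          intro hm
          apply hne
          ext w
          exact ⟨fun h => m.trans' h hm, fun h => m.trans' h (m.symm' hm)⟩
        exact hno z hz z' hz' hmzz'
      · rw [hcls1 z hz, hcls2 z' hz'] at hne ⊢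
        have hsubE : {w | m w z} ⊆ C :=
          fun w hw => hCmem (P.symm' (Setoid.le_def.mp hmLEP hw)) hz
        have hCne : C ≠ {w | P w z'} := by
          intro he
          apply hz'
          have : z' ∈ {w | P w z'} := P.refl' z'
          rw [← he] at this
          exact this
        have hadm := cmp_admissible G r hα0 C hCcl _ (P.mem_classes z') hCne
        calc min (wt r {w | m w z}) (wt r {w | P w z'}) ^ α
            ≤ min (wt r C) (wt r {w | P w z'}) ^ α :=
              ENNReal.rpow_le_rpow (min_le_min (wt_mono r hsubE) le_rfl) hα0
          _ < setDist G C {w | P w z'} := hadm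
          _ ≤ setDist G {w | m w z} {w | P w z'} :=
              setDist_anti G hsubE (subset_refl _)
      · rw [hcls2 z hz, hcls1 z' hz'] at hne ⊢
        have hsubE' : {w | m w z'} ⊆ C :=
          fun w hw => hCmem (P.symm' (Setoid.le_def.mp hmLEP hw)) hz'
        have hCne : {w | P w z} ≠ C := by
          intro he
          apply hz
          have : z ∈ {w | P w z} := P.refl' z
          rw [he] at this
          exact this
        have hadm := cmp_admissible G r hα0 _ (P.mem_classes z) C hCcl hCne
        calc min (wt r {w | P w z}) (wt r {w | m w z'}) ^ α
            ≤ min (wt r {w | P w z}) (wt r C) ^ α :=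
              ENNReal.rpow_le_rpow (min_le_min le_rfl (wt_mono r hsubE')) hα0
          _ < setDist G {w | P w z} C := hadm
          _ ≤ setDist G {w | P w z} {w | m w z'} :=
              setDist_anti G (subset_refl _) hsubE'
      · rw [hcls2 z hz, hcls2 z' hz'] at hne ⊢
        exact cmp_admissible G r hα0 _ (P.mem_classes z) _ (P.mem_classes z') hne
    have hPs : P ≤ s := cmp_le_of_admissible G r hsadm
    exact hmuv ((Setoid.le_def.mp hPs huv).2 huC)
  obtain ⟨e, heC, e', he'C, hmee, hd⟩ := hA
  set A := {w | m w e} with hAdef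
  set B := {w | m w e'} with hBdef
  have hsubA : A ⊆ C :=
    fun w hw => hCmem (P.symm' (Setoid.le_def.mp hmLEP hw)) heC
  have hsubB : B ⊆ C :=
    fun w hw => hCmem (P.symm' (Setoid.le_def.mp hmLEP hw)) he'C
  have hABdisj : Disjoint A B := by
    rw [Set.disjoint_left]
    intro w hwA hwB
    exact hmee (m.trans' (m.symm' hwA) hwB)
  obtain ⟨p, hp, q, hq, hpq⟩ := exists_setDist_eq G (A := A) (B := B) ⟨e, m.refl' e⟩ ⟨e', m.refl' e'⟩
  have hABcl : ∀ {z w : V}, m z w → z ∈ A ∪ B → w ∈ A ∪ B := by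
    rintro z w hzw (hz | hz)
    · exact Or.inl (m.trans' (m.symm' hzw) hz)
    · exact Or.inr (m.trans' (m.symm' hzw) hz)
  let t' : Setoid V :=
    ⟨fun z w => m z w ∨ (z ∈ A ∪ B ∧ w ∈ A ∪ B),
      ⟨fun z => Or.inl (m.refl' z),
       fun {z w} h => h.elim (fun h => Or.inl (m.symm' h)) (fun h => Or.inr ⟨h.2, h.1⟩),
       fun {z w x} h1 h2 => by
         rcases h1 with h1 | h1 <;> rcases h2 with h2 | h2
         · exact Or.inl (m.trans' h1 h2)
         · exact Or.inr ⟨hABcl (m.symm' h1) h2.1, h2.2⟩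
         · exact Or.inr ⟨h1.1, hABcl h2 h1.2⟩
         · exact Or.inr ⟨h1.1, h2.2⟩⟩⟩
  have hclt1 : ∀ z, z ∈ A ∪ B → {w | t' w z} = A ∪ B := by
    intro z hz
    ext w
    simp only [Set.mem_setOf_eq]
    constructor
    · rintro (h | h)
      · exact hABcl (m.symm' h) hz
      · exact h.1
    · intro hw
      exact Or.inr ⟨hw, hz⟩
  have hclt2 : ∀ z, z ∉ A ∪ B → {w | t' w z} = {w | m w z} := by
    intro z hz
    ext w
    simp only [Set.mem_setOf_eq]
    exact ⟨fun h => h.elim id (fun h => absurd h.2 hz), Or.inl⟩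
  have hwtAB : wt r (A ∪ B) = wt r A + wt r B := wt_union r hABdisj
  have hdiamA : ∀ u' ∈ A, ∀ v' ∈ A, (G.dist u' v' : ℝ≥0∞) ≤ wt r A ^ α * κ :=
    fun u' hu' v' hv' => hgoodm A (m.mem_classes e) u' hu' v' hv'
  have hdiamB : ∀ u' ∈ B, ∀ v' ∈ B, (G.dist u' v' : ℝ≥0∞) ≤ wt r B ^ α * κ :=
    fun u' hu' v' hv' => hgoodm B (m.mem_classes e') u' hu' v' hv'
  have hcross : ∀ u' ∈ A, ∀ v' ∈ B, (G.dist u' v' : ℝ≥0∞) ≤ wt r (A ∪ B) ^ α * κ := by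
    intro u' hu' v' hv'
    have h1 : G.dist u' v' ≤ G.dist u' p + G.dist p v' := hconn.dist_triangle
    have h2 : G.dist p v' ≤ G.dist p q + G.dist q v' := hconn.dist_triangle
    have htriN : G.dist u' v' ≤ G.dist u' p + (G.dist p q + G.dist q v') :=
      le_trans h1 (Nat.add_le_add_left h2 _)
    have htri : (G.dist u' v' : ℝ≥0∞) ≤
        (G.dist u' p : ℝ≥0∞) + (G.dist p q : ℝ≥0∞) + (G.dist q v' : ℝ≥0∞) := by
      calc (G.dist u' v' : ℝ≥0∞)
          ≤ ((G.dist u' p + (G.dist p q + G.dist q v') : ℕ) : ℝ≥0∞) := by exact_mod_cast htriN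
        _ = (G.dist u' p : ℝ≥0∞) + (G.dist p q : ℝ≥0∞) + (G.dist q v' : ℝ≥0∞) := by
            push_cast
            ring
    have hdpq : (G.dist p q : ℝ≥0∞) ≤ min (wt r A) (wt r B) ^ α := by
      rw [hpq]
      exact hd
    calc (G.dist u' v' : ℝ≥0∞)
        ≤ (wt r A ^ α * κ) + min (wt r A) (wt r B) ^ α + (wt r B ^ α * κ) :=
          htri.trans (add_le_add (add_le_add (hdiamA u' hu' p hp) hdpq) (hdiamB q hq v' hv'))
      _ ≤ (wt r A + wt r B) ^ α * κ := merge_key hα _ _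
      _ = wt r (A ∪ B) ^ α * κ := by rw [hwtAB]
  have ht'S : t' ∈ S := by
    constructor
    · refine Setoid.le_def.mpr fun {z w} h => ?_
      rcases h with h | h
      · exact Setoid.le_def.mp hmLEP h
      · exact hCrel z ((Set.union_subset hsubA hsubB) h.1) w ((Set.union_subset hsubA hsubB) h.2)
    · intro E hE u' hu' v' hv'
      obtain ⟨z, rfl⟩ := hE
      by_cases hz : z ∈ A ∪ B
      · rw [hclt1 z hz] at hu' hv' ⊢
        rcases hu' with hu' | hu' <;> rcases hv' with hv' | hv'
        · exact (hdiamA u' hu' v' hv').trans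
            (mul_le_mul_left (ENNReal.rpow_le_rpow (wt_mono r Set.subset_union_left) hα0) κ)
        · exact hcross u' hu' v' hv'
        · rw [show (G.dist u' v' : ℝ≥0∞) = (G.dist v' u' : ℝ≥0∞) by
            rw [SimpleGraph.dist_comm]]
          exact hcross v' hv' u' hu'
        · exact (hdiamB u' hu' v' hv').trans
            (mul_le_mul_left (ENNReal.rpow_le_rpow (wt_mono r Set.subset_union_right) hα0) κ)
      · rw [hclt2 z hz] at hu' hv' ⊢
        exact hgoodm _ (m.mem_classes z) u' hu' v' hv'
  have hle : m ≤ t' := Setoid.le_def.mpr fun {z w} h => Or.inl h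
  have ht'm : t' ≤ m := hmax.2 ht'S hle
  exact hmee (Setoid.le_def.mp ht'm
    (Or.inr ⟨Or.inl (m.refl' e), Or.inr (m.refl' e')⟩))

end Diam

/-- Distance bounds for neighbours in the oriented graph `G^η`: if `y` lies on the outer
boundary of the `η`-stabiliser of `x` (i.e. `d(𝒮^η_x, y) = 1`), then
`η·r(𝒞_x)^α ≤ d(x,y) ≤ 1 + γ·r(𝒞_x)^α`, where
`γ = 1/(2^α − 2) + (η/(1−η))·(1 + 1/(2^α − 2))`. -/
theorem etaStab_neighbour_dist_bounds
    {V : Type*} (G : SimpleGraph V) (hconn : G.Connected)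
    (hlf : ∀ v : V, (G.neighborSet v).Finite)
    (r : V → ℝ≥0) (α : ℝ) (hα : 1 < α)
    (η : ℝ) (hη0 : 0 < η) (hη1 : η < 1)
    (γ : ℝ) (hγ : γ = 1 / (2 ^ α - 2) + η / (1 - η) * (1 + 1 / (2 ^ α - 2)))
    (x y : V) (hxy : setDist G (etaStab G r α η x) {y} = 1) :
    ENNReal.ofReal η * (wt r (cluster G r α x)) ^ α ≤ (G.dist x y : ℝ≥0∞) ∧
    (G.dist x y : ℝ≥0∞) ≤ 1 + ENNReal.ofReal γ * (wt r (cluster G r α x)) ^ α := by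
  have hα0 : (0:ℝ) ≤ α := by linarith
  have hxS : x ∈ etaStab G r α η x :=
    Set.mem_sUnion.mpr ⟨cluster G r α x, Relation.ReflTransGen.refl, mem_cluster_self G r x⟩
  constructor
  · -- lower bound
    by_contra hcon
    push_neg at hcon
    have hy : y ∈ etaStab G r α η x := by
      by_cases hxyrel : (CMP G r α) x y
      · exact Set.mem_sUnion.mpr ⟨cluster G r α x, Relation.ReflTransGen.refl, hxyrel⟩
      · refine Set.mem_sUnion.mpr ⟨cluster G r α y, Relation.ReflTransGen.single ?_,
          mem_cluster_self G r y⟩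
        refine ⟨cluster_mem_classes G r x, cluster_mem_classes G r y, ?_, ?_⟩
        · intro he
          exact hxyrel (by
            have : y ∈ cluster G r α y := mem_cluster_self G r y
            rw [← he] at this
            exact this)
        · calc setDist G (cluster G r α x) (cluster G r α y) ≤ (G.dist x y : ℝ≥0∞) :=
              setDist_le_dist G (mem_cluster_self G r x) (mem_cluster_self G r y)
            _ ≤ ENNReal.ofReal η * wt r (cluster G r α x) ^ α := hcon.le
    have h0 : setDist G (etaStab G r α η x) {y} = 0 := by
      refine le_antisymm ?_ zero_le
      have := setDist_le_dist G (A := etaStab G r α η x) (B := {y}) hy rfl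
      simpa [SimpleGraph.dist_self] using this
    rw [h0] at hxy
    exact absurd hxy (by norm_num)
  · -- upper bound
    have h2 : (0:ℝ) < 2 ^ α - 2 := by
      have h21 : (2:ℝ) ^ (1:ℝ) < 2 ^ α := Real.rpow_lt_rpow_of_exponent_lt (by norm_num) hα
      rw [Real.rpow_one] at h21
      linarith
    set d₀ : ℝ := ((2:ℝ) ^ α - 2)⁻¹ with hd₀def
    have hd₀0 : 0 < d₀ := by positivity
    have h1η : (0:ℝ) < 1 - η := by linarith
    set c₀ : ℝ := η / (1 - η) * (1 + d₀) with hc₀def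
    have hc₀0 : 0 ≤ c₀ := by positivity
    have hγeq : γ = d₀ + c₀ := by
      rw [hγ, hc₀def, hd₀def]
      field_simp
    have hγ' : ENNReal.ofReal γ = ENNReal.ofReal d₀ + ENNReal.ofReal c₀ := by
      rw [hγeq, ENNReal.ofReal_add hd₀0.le hc₀0]
    have hkey : η * (1 + d₀ + c₀) = c₀ := by
      have hc : c₀ * (1 - η) = η * (1 + d₀) := by
        rw [hc₀def]
        field_simp
      linear_combination -hc
    have hfac : ENNReal.ofReal η * (1 + ENNReal.ofReal d₀ + ENNReal.ofReal c₀) =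
        ENNReal.ofReal c₀ := by
      rw [← ENNReal.ofReal_one, ← ENNReal.ofReal_add (by norm_num) hd₀0.le,
        ← ENNReal.ofReal_add (by positivity) hc₀0, ← ENNReal.ofReal_mul hη0.le, hkey]
    set W := wt r (cluster G r α x) with hWdef
    have main : ∀ C', Relation.ReflTransGen (EtaDesc G r α η) (cluster G r α x) C' →
        C' ∈ (CMP G r α).classes ∧ ∀ z' ∈ C',
          (G.dist x z' : ℝ≥0∞) + ENNReal.ofReal c₀ * wt r C' ^ α ≤
            W ^ α * (ENNReal.ofReal d₀ + ENNReal.ofReal c₀) := by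
      intro C' h
      induction h with
      | refl =>
        refine ⟨cluster_mem_classes G r x, fun z' hz' => ?_⟩
        have hdiam := cmp_good G r hconn hα _ (cluster_mem_classes G r x)
          x (mem_cluster_self G r x) z' hz'
        calc (G.dist x z' : ℝ≥0∞) + ENNReal.ofReal c₀ * W ^ α
            ≤ W ^ α * ENNReal.ofReal d₀ + ENNReal.ofReal c₀ * W ^ α :=
              add_le_add hdiam le_rfl
          _ = W ^ α * (ENNReal.ofReal d₀ + ENNReal.ofReal c₀) := by ring
      | @tail Cb Cc hchain hstep ih =>
        obtain ⟨hbcl, hbound⟩ := ih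
        have hwstep : wt r Cc ^ α ≤ ENNReal.ofReal η * wt r Cb ^ α :=
          eta_step_wt G r hα0 hη1 hstep
        obtain ⟨-, hccl, -, hdist⟩ := hstep
        obtain ⟨p, hp, q, hq, hpq⟩ :=
          exists_setDist_eq G (class_nonempty hbcl) (class_nonempty hccl)
        refine ⟨hccl, fun z' hz' => ?_⟩
        have h1 : G.dist x z' ≤ G.dist x p + G.dist p z' := hconn.dist_triangle
        have h2 : G.dist p z' ≤ G.dist p q + G.dist q z' := hconn.dist_triangle
        have htriN : G.dist x z' ≤ G.dist x p + (G.dist p q + G.dist q z') :=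
          le_trans h1 (Nat.add_le_add_left h2 _)
        have htri : (G.dist x z' : ℝ≥0∞) ≤
            (G.dist x p : ℝ≥0∞) + (G.dist p q : ℝ≥0∞) + (G.dist q z' : ℝ≥0∞) := by
          calc (G.dist x z' : ℝ≥0∞)
              ≤ ((G.dist x p + (G.dist p q + G.dist q z') : ℕ) : ℝ≥0∞) := by exact_mod_cast htriN
            _ = _ := by push_cast; ring
        have hdpq : (G.dist p q : ℝ≥0∞) ≤ ENNReal.ofReal η * wt r Cb ^ α := by
          rw [hpq]
          exact hdist
        have hdqz : (G.dist q z' : ℝ≥0∞) ≤ wt r Cc ^ α * ENNReal.ofReal d₀ :=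
          cmp_good G r hconn hα _ hccl q hq z' hz'
        have hxp := hbound p hp
        calc (G.dist x z' : ℝ≥0∞) + ENNReal.ofReal c₀ * wt r Cc ^ α
            ≤ ((G.dist x p : ℝ≥0∞) + (G.dist p q : ℝ≥0∞) + (G.dist q z' : ℝ≥0∞))
              + ENNReal.ofReal c₀ * wt r Cc ^ α := add_le_add htri le_rfl
          _ ≤ ((G.dist x p : ℝ≥0∞) + ENNReal.ofReal η * wt r Cb ^ α
                + (ENNReal.ofReal η * wt r Cb ^ α) * ENNReal.ofReal d₀)
              + ENNReal.ofReal c₀ * (ENNReal.ofReal η * wt r Cb ^ α) := by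
            gcongr
            exact hdqz.trans (mul_le_mul_left hwstep _)
          _ = (G.dist x p : ℝ≥0∞) +
              (ENNReal.ofReal η * (1 + ENNReal.ofReal d₀ + ENNReal.ofReal c₀)) * wt r Cb ^ α := by
            ring
          _ = (G.dist x p : ℝ≥0∞) + ENNReal.ofReal c₀ * wt r Cb ^ α := by rw [hfac]
          _ ≤ W ^ α * (ENNReal.ofReal d₀ + ENNReal.ofReal c₀) := hxp
    obtain ⟨z', hz'S, hz'1⟩ : ∃ z' ∈ etaStab G r α η x, (G.dist z' y : ℝ≥0∞) = 1 := by
      obtain ⟨a, ha, b, hb, hab⟩ :=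
        exists_setDist_eq G (A := etaStab G r α η x) (B := {y}) ⟨x, hxS⟩ ⟨y, rfl⟩
      have hby : b = y := hb
      subst hby
      rw [hxy] at hab
      exact ⟨a, ha, hab⟩
    obtain ⟨Ct, hCt, hz'Ct⟩ := Set.mem_sUnion.mp hz'S
    obtain ⟨-, hbound⟩ := main Ct hCt
    have hdxz : (G.dist x z' : ℝ≥0∞) ≤ W ^ α * (ENNReal.ofReal d₀ + ENNReal.ofReal c₀) :=
      le_trans le_self_add (hbound z' hz'Ct)
    calc (G.dist x y : ℝ≥0∞) ≤ (G.dist x z' : ℝ≥0∞) + (G.dist z' y : ℝ≥0∞) := by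
          exact_mod_cast hconn.dist_triangle (v := z')
      _ = (G.dist x z' : ℝ≥0∞) + 1 := by rw [hz'1]
      _ ≤ W ^ α * (ENNReal.ofReal d₀ + ENNReal.ofReal c₀) + 1 := add_le_add hdxz le_rfl
      _ = 1 + ENNReal.ofReal γ * W ^ α := by rw [hγ']; ring


end CMPPaper
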